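/- arXiv:2310.08119 — 2 statements merged into one kernel-verified Lean document; each statement's English description precedes it below -/
import Mathlib

section
/- With assumptions (A₁)–(A₅), if {u_n} ⊂ 𝒩 is a bounded Palais–Smale sequence for Φ (Φ(u_n) → c, Φ'(u_n) → 0) and u_n ⇀ u with pointwise convergence at every vertex, then Φ'(u) = 0; that is, the weak pointwise limit of a Palais–Smale sequence is a critical point of Φ. -/
open scoped BigOperators
open Filter Topology

noncomputable section

abbrev Vtx (N : ℕ) := Fin N → ℤ

def LatAdj {N : ℕ} (x y : Vtx N) : Prop := (∑ i, |x i - y i|) = 1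

instance {N : ℕ} (x y : Vtx N) : Decidable (LatAdj x y) := by
  unfold LatAdj; infer_instance

/-- `∑_x |u x|^p`. -/
noncomputable def lpSum (N : ℕ) (p : ℝ) (u : Vtx N → ℝ) : ℝ := ∑' x, |u x| ^ p

/-- `(1/2) ∑_{x∼y} |u x − u y|^p` (sum over ordered pairs of adjacent vertices). -/
noncomputable def pEnergy (N : ℕ) (p : ℝ) (u : Vtx N → ℝ) : ℝ :=
  (1/2) * ∑' z : Vtx N × Vtx N, if LatAdj z.1 z.2 then |u z.1 - u z.2| ^ p else 0

/-- `(1/2) ∑_{x∼y} |∇_{xy}u|^{p−2} (∇_{xy}u)(∇_{xy}v)`. -/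
noncomputable def gradPair (N : ℕ) (p : ℝ) (u v : Vtx N → ℝ) : ℝ :=
  (1/2) * ∑' z : Vtx N × Vtx N,
    if LatAdj z.1 z.2 then |u z.2 - u z.1| ^ (p - 2) * (u z.2 - u z.1) * (v z.2 - v z.1) else 0

/-- discrete p-Laplacian. -/
noncomputable def pLap (N : ℕ) (p : ℝ) (u : Vtx N → ℝ) (x : Vtx N) : ℝ :=
  ∑' y, if LatAdj x y then |u y - u x| ^ (p - 2) * (u y - u x) else 0

/-- `‖u‖^p` for the potential norm. -/
noncomputable def eNormP (N : ℕ) (p : ℝ) (V : Vtx N → ℝ) (u : Vtx N → ℝ) : ℝ :=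
  pEnergy N p u + ∑' x, V x * |u x| ^ p

/-- the potential norm `‖u‖`. -/
noncomputable def eNorm (N : ℕ) (p : ℝ) (V : Vtx N → ℝ) (u : Vtx N → ℝ) : ℝ :=
  (eNormP N p V u) ^ (1/p)

/-- `F(x,t) = ∫₀^t f(x,s) ds`. -/
noncomputable def Fprim {N : ℕ} (f : Vtx N → ℝ → ℝ) (x : Vtx N) (t : ℝ) : ℝ :=
  ∫ s in (0:ℝ)..t, f x s

/-- the variational functional `Φ`. -/
noncomputable def PhiFun (N : ℕ) (p : ℝ) (V : Vtx N → ℝ) (f : Vtx N → ℝ → ℝ)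
    (u : Vtx N → ℝ) : ℝ :=
  (1/p) * eNormP N p V u - ∑' x, Fprim f x (u x)

/-- `Φ'(u)v`. -/
noncomputable def PhiDeriv (N : ℕ) (p : ℝ) (V : Vtx N → ℝ) (f : Vtx N → ℝ → ℝ)
    (u v : Vtx N → ℝ) : ℝ :=
  gradPair N p u v + (∑' x, V x * |u x| ^ (p - 2) * u x * v x) - ∑' x, f x (u x) * v x

/-- membership in `E = ℓ^p`. -/
def memE (N : ℕ) (p : ℝ) (u : Vtx N → ℝ) : Prop := Summable fun x => |u x| ^ p

/-- the Nehari manifold. -/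
def Nehari (N : ℕ) (p : ℝ) (V : Vtx N → ℝ) (f : Vtx N → ℝ → ℝ) : Set (Vtx N → ℝ) :=
  {u | memE N p u ∧ u ≠ 0 ∧ PhiDeriv N p V f u u = 0}

namespace Stmt18Aux

open Finset

variable {N : ℕ} {p : ℝ}

/-- the (finite) box of candidate neighbours of a vertex. -/
def box (x : Vtx N) : Finset (Vtx N) :=
  Fintype.piFinset fun i => ({x i - 1, x i, x i + 1} : Finset ℤ)

lemma self_mem_box (x : Vtx N) : x ∈ box x := by
  rw [box, Fintype.mem_piFinset]
  intro i; simp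

lemma mem_box_of_adj {x y : Vtx N} (h : LatAdj x y) : y ∈ box x := by
  rw [box, Fintype.mem_piFinset]
  intro i
  have h' : (∑ j, |x j - y j|) = 1 := h
  have h2 : |x i - y i| ≤ 1 := by
    have h3 := Finset.single_le_sum (f := fun j => |x j - y j|)
      (fun j _ => abs_nonneg _) (Finset.mem_univ i)
    simpa [h'] using h3
  have h3 := abs_le.mp h2
  simp only [Finset.mem_insert, Finset.mem_singleton]
  omega

lemma adj_comm {x y : Vtx N} (h : LatAdj x y) : LatAdj y x := by
  have h' : (∑ j, |x j - y j|) = 1 := h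
  show (∑ j, |y j - x j|) = 1
  simpa [abs_sub_comm] using h'

lemma adj_comm_iff {x y : Vtx N} : LatAdj x y ↔ LatAdj y x := ⟨adj_comm, adj_comm⟩

lemma card_box_le (x : Vtx N) : (box x).card ≤ 3 ^ N := by
  rw [box, Fintype.card_piFinset]
  calc ∏ i, ({x i - 1, x i, x i + 1} : Finset ℤ).card
      ≤ ∏ _i : Fin N, 3 := by
        apply Finset.prod_le_prod (fun _ _ => Nat.zero_le _)
        intro i _
        apply (Finset.card_insert_le _ _).trans
        apply Nat.succ_le_succ
        apply (Finset.card_insert_le _ _).trans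
        simp
    _ = 3 ^ N := by simp

lemma abs_phi (hp : 1 < p) (t : ℝ) : |(|t| ^ (p - 2) * t)| = |t| ^ (p - 1) := by
  rcases eq_or_ne t 0 with rfl | ht
  · simp [Real.zero_rpow (show p - 1 ≠ 0 by intro h; nlinarith)]
  · rw [abs_mul, abs_of_nonneg (Real.rpow_nonneg (abs_nonneg t) _)]
    have h1 : p - 2 + 1 = p - 1 := by ring
    rw [← h1, Real.rpow_add_one (abs_ne_zero.mpr ht)]

lemma phi_cont (hp : 1 < p) : Continuous (fun t : ℝ => |t| ^ (p - 2) * t) := by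
  rw [continuous_iff_continuousAt]
  intro t
  rcases eq_or_ne t 0 with rfl | ht
  · have h0 : |(0:ℝ)| ^ (p - 2) * 0 = 0 := by simp
    rw [ContinuousAt, h0]
    have habs : Tendsto (fun s : ℝ => |s| ^ (p - 1)) (𝓝 0) (𝓝 0) := by
      have h1 : ContinuousAt (fun x : ℝ => x ^ (p - 1)) |0| :=
        Real.continuousAt_rpow_const _ _ (Or.inr (by linarith))
      have h2 := h1.comp (continuous_abs.continuousAt (x := (0:ℝ)))
      rw [ContinuousAt] at h2
      simpa [Function.comp_def, Real.zero_rpow (show p - 1 ≠ 0 by intro h; nlinarith)] using h2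
    exact squeeze_zero_norm
      (fun s => le_of_eq (by rw [Real.norm_eq_abs, abs_phi hp])) habs
  · have h1 : ContinuousAt (fun s : ℝ => |s| ^ (p - 2)) t :=
      (Real.continuousAt_rpow_const _ _ (Or.inl (abs_ne_zero.mpr ht))).comp
        continuous_abs.continuousAt
    exact h1.mul continuousAt_id

lemma pLap_eq_sum (u : Vtx N → ℝ) (x : Vtx N) :
    pLap N p u x
      = ∑ y ∈ box x, if LatAdj x y then |u y - u x| ^ (p - 2) * (u y - u x) else 0 :=
  tsum_eq_sum (fun y hy => if_neg fun h => hy (mem_box_of_adj h))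

lemma memE_single (hp : 1 < p) (x₀ : Vtx N) : memE N p (Pi.single x₀ (1:ℝ)) := by
  apply summable_of_ne_finset_zero (s := {x₀})
  intro b hb
  rw [Pi.single_eq_of_ne (by simpa using hb)]
  simp [Real.zero_rpow (show p ≠ 0 by positivity)]

lemma gradPair_single (hp : 1 < p) (u : Vtx N → ℝ) (x₀ : Vtx N) :
    gradPair N p u (Pi.single x₀ 1) = - pLap N p u x₀ := by
  classical
  set d : Vtx N → ℝ := Pi.single x₀ 1 with hd
  set B := box x₀ with hB
  have hzero : ∀ z : Vtx N × Vtx N, z ∉ B ×ˢ B →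
      (if LatAdj z.1 z.2 then
        |u z.2 - u z.1| ^ (p - 2) * (u z.2 - u z.1) * (d z.2 - d z.1) else 0) = 0 := by
    intro z hz
    split_ifs with hadj
    · have h1 : z.1 ≠ x₀ := by
        rintro h
        exact hz (Finset.mem_product.mpr ⟨h ▸ self_mem_box _, by rw [hB]; exact h ▸ mem_box_of_adj (h ▸ hadj)⟩)
      have h2 : z.2 ≠ x₀ := by
        rintro h
        exact hz (Finset.mem_product.mpr ⟨by rw [hB]; exact mem_box_of_adj (h ▸ adj_comm hadj), h ▸ self_mem_box _⟩)
      rw [hd]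
      simp only [Pi.single_eq_of_ne h1, Pi.single_eq_of_ne h2, sub_zero, sub_self, mul_zero]
    · rfl
  rw [gradPair, tsum_eq_sum hzero, Finset.sum_product]
  have hsplit : ∀ a b : Vtx N,
      (if LatAdj a b then |u b - u a| ^ (p - 2) * (u b - u a) * (d b - d a) else 0)
      = (if LatAdj a b then |u b - u a| ^ (p - 2) * (u b - u a) * d b else 0)
        - (if LatAdj a b then |u b - u a| ^ (p - 2) * (u b - u a) * d a else 0) := by
    intro a b; split_ifs <;> ring
  simp only [hsplit, Finset.sum_sub_distrib]
  have hx₀B : x₀ ∈ B := self_mem_box x₀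
  have e1 : (∑ a ∈ B, ∑ b ∈ B,
        if LatAdj a b then |u b - u a| ^ (p - 2) * (u b - u a) * d b else 0)
      = - ∑ y ∈ B, (if LatAdj x₀ y then |u y - u x₀| ^ (p - 2) * (u y - u x₀) else 0) := by
    rw [← Finset.sum_neg_distrib]
    apply Finset.sum_congr rfl
    intro a _
    rw [Finset.sum_eq_single_of_mem x₀ hx₀B
      (fun b _ hbne => by rw [hd, Pi.single_eq_of_ne hbne]; split_ifs <;> simp)]
    by_cases h : LatAdj x₀ a
    · rw [if_pos (adj_comm h), if_pos h, hd, Pi.single_eq_same]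
      have hsub : u x₀ - u a = -(u a - u x₀) := by ring
      rw [hsub, abs_neg, mul_neg, mul_one]
    · rw [if_neg (fun hc => h (adj_comm hc)), if_neg h, neg_zero]
  have e2 : (∑ a ∈ B, ∑ b ∈ B,
        if LatAdj a b then |u b - u a| ^ (p - 2) * (u b - u a) * d a else 0)
      = ∑ y ∈ B, (if LatAdj x₀ y then |u y - u x₀| ^ (p - 2) * (u y - u x₀) else 0) := by
    rw [Finset.sum_eq_single_of_mem x₀ hx₀B
      (fun a _ hane => Finset.sum_eq_zero fun b _ => by
        rw [hd, Pi.single_eq_of_ne hane]; split_ifs <;> simp)]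
    apply Finset.sum_congr rfl
    intro b _
    rw [hd, Pi.single_eq_same]
    split_ifs <;> simp
  rw [e1, e2, pLap_eq_sum]
  ring

lemma phiDeriv_single (hp : 1 < p) (V : Vtx N → ℝ) (f : Vtx N → ℝ → ℝ)
    (u : Vtx N → ℝ) (x₀ : Vtx N) :
    PhiDeriv N p V f u (Pi.single x₀ 1)
      = -pLap N p u x₀ + V x₀ * |u x₀| ^ (p - 2) * u x₀ - f x₀ (u x₀) := by
  have hV : (∑' x, V x * |u x| ^ (p - 2) * u x * ((Pi.single x₀ 1 : Vtx N → ℝ) x))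
      = V x₀ * |u x₀| ^ (p - 2) * u x₀ := by
    rw [tsum_eq_single x₀ (fun b hb => by rw [Pi.single_eq_of_ne hb, mul_zero]),
      Pi.single_eq_same, mul_one]
  have hf : (∑' x, f x (u x) * ((Pi.single x₀ 1 : Vtx N → ℝ) x)) = f x₀ (u x₀) := by
    rw [tsum_eq_single x₀ (fun b hb => by rw [Pi.single_eq_of_ne hb, mul_zero]),
      Pi.single_eq_same, mul_one]
  rw [PhiDeriv, gradPair_single hp u x₀, hV, hf]

lemma young_pair (hp : 1 < p) (a b : ℝ) :
    |a| ^ (p - 1) * |b| ≤ |a| ^ p / (p / (p - 1)) + |b| ^ p / p := by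
  have hpq : (p / (p - 1)).HolderConjugate p :=
    (Real.HolderConjugate.conjExponent hp).symm
  have h := Real.young_inequality_of_nonneg
    (Real.rpow_nonneg (abs_nonneg a) (p - 1)) (abs_nonneg b) hpq
  have h2 : (|a| ^ (p - 1)) ^ (p / (p - 1)) = |a| ^ p := by
    rw [← Real.rpow_mul (abs_nonneg a)]
    congr 1
    have hne : p - 1 ≠ 0 := by linarith
    field_simp
  rwa [h2] at h

lemma summable_pair_fst (hp : 1 < p) {w : Vtx N → ℝ}
    (hw : Summable fun x : Vtx N => |w x| ^ p) :
    Summable fun z : Vtx N × Vtx N => if LatAdj z.1 z.2 then |w z.1| ^ p else 0 := by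
  have hnn : ∀ z : Vtx N × Vtx N,
      0 ≤ (if LatAdj z.1 z.2 then |w z.1| ^ p else 0) := by
    intro z; split_ifs
    · exact Real.rpow_nonneg (abs_nonneg _) _
    · exact le_rfl
  rw [summable_prod_of_nonneg hnn]
  constructor
  · intro a
    apply summable_of_ne_finset_zero (s := box a)
    intro b hb
    exact if_neg fun h => hb (mem_box_of_adj h)
  · apply Summable.of_nonneg_of_le (fun a => tsum_nonneg fun b => hnn (a, b)) ?_
      (hw.mul_left ((3:ℝ) ^ N))
    intro a
    rw [tsum_eq_sum (s := box a) (fun b hb => if_neg fun h => hb (mem_box_of_adj h))]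
    calc (∑ b ∈ box a, if LatAdj a b then |w a| ^ p else 0)
        ≤ ∑ _b ∈ box a, |w a| ^ p := by
          apply Finset.sum_le_sum
          intro b _
          split_ifs
          exacts [le_rfl, Real.rpow_nonneg (abs_nonneg _) _]
      _ = ((box a).card : ℝ) * |w a| ^ p := by rw [Finset.sum_const, nsmul_eq_mul]
      _ ≤ (3:ℝ) ^ N * |w a| ^ p := by
          apply mul_le_mul_of_nonneg_right _ (Real.rpow_nonneg (abs_nonneg _) _)
          have := card_box_le a
          calc ((box a).card : ℝ) ≤ ((3 ^ N : ℕ) : ℝ) := by exact_mod_cast this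
            _ = (3:ℝ) ^ N := by push_cast; ring

lemma summable_pair_snd (hp : 1 < p) {w : Vtx N → ℝ}
    (hw : Summable fun x : Vtx N => |w x| ^ p) :
    Summable fun z : Vtx N × Vtx N => if LatAdj z.1 z.2 then |w z.2| ^ p else 0 := by
  have h := summable_pair_fst hp hw
  have he := (Equiv.prodComm (Vtx N) (Vtx N)).summable_iff
    (f := fun z : Vtx N × Vtx N => if LatAdj z.1 z.2 then |w z.1| ^ p else 0)
  refine (he.mpr h).congr fun z => ?_
  simp only [Function.comp, Equiv.prodComm_apply, Prod.fst_swap, Prod.snd_swap]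
  exact if_congr adj_comm_iff rfl rfl

lemma rpow_sub_le (hp0 : 0 ≤ p) (a b : ℝ) :
    |a - b| ^ p ≤ 2 ^ p * (|a| ^ p + |b| ^ p) := by
  have h1 : |a - b| ≤ 2 * max |a| |b| := by
    apply (abs_sub a b).trans
    rcases max_cases |a| |b| with ⟨h, h'⟩ | ⟨h, h'⟩ <;> rw [h] <;> linarith
  calc |a - b| ^ p ≤ (2 * max |a| |b|) ^ p :=
      Real.rpow_le_rpow (abs_nonneg _) h1 hp0
    _ = 2 ^ p * (max |a| |b|) ^ p := by
        rw [Real.mul_rpow (by norm_num) (le_max_of_le_left (abs_nonneg a))]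
    _ ≤ 2 ^ p * (|a| ^ p + |b| ^ p) := by
        apply mul_le_mul_of_nonneg_left _ (Real.rpow_nonneg (by norm_num) _)
        rcases max_cases |a| |b| with ⟨h, _⟩ | ⟨h, _⟩ <;> rw [h]
        · exact le_add_of_nonneg_right (Real.rpow_nonneg (abs_nonneg _) _)
        · exact le_add_of_nonneg_left (Real.rpow_nonneg (abs_nonneg _) _)

lemma summable_pair_grad (hp : 1 < p) {w : Vtx N → ℝ}
    (hw : Summable fun x : Vtx N => |w x| ^ p) :
    Summable fun z : Vtx N × Vtx N =>
      if LatAdj z.1 z.2 then |w z.2 - w z.1| ^ p else 0 := by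
  apply Summable.of_nonneg_of_le
    (fun z => by split_ifs; exacts [Real.rpow_nonneg (abs_nonneg _) _, le_rfl])
    ?_ ((((summable_pair_snd hp hw).add (summable_pair_fst hp hw))).mul_left ((2:ℝ) ^ p))
  intro z
  split_ifs with h
  · have := rpow_sub_le (show (0:ℝ) ≤ p by linarith) (w z.2) (w z.1)
    simpa [if_pos h] using this
  · simp [h]

lemma summable_phi_mul {ι : Type*} (hp : 1 < p) {A w : ι → ℝ}
    (hA : Summable fun i => |A i| ^ p) (hw : Summable fun i => |w i| ^ p) :
    Summable fun i => |A i| ^ (p - 2) * A i * w i := by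
  apply Summable.of_abs
  apply Summable.of_nonneg_of_le (fun i => abs_nonneg _) ?_
    ((hA.div_const (p / (p - 1))).add (hw.div_const p))
  intro i
  rw [abs_mul, abs_phi hp (A i)]
  exact young_pair hp (A i) (w i)

end Stmt18Aux


/-- the weak/pointwise limit of a bounded Palais-Smale sequence on the
Nehari manifold is a critical point of Phi. -/
theorem stmt_18 (N : ℕ) (p q : ℝ) (hp : 1 < p) (hq : p < q)
    (V : Vtx N → ℝ) (f : Vtx N → ℝ → ℝ) (T : ℕ) (hT : 0 < T)
    (hA1 : ∃ a : ℝ, 0 < a ∧ ∀ x u, |f x u| ≤ a * (1 + |u| ^ (q - 1)))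
    (hfc : ∀ x, Continuous (f x))
    (hA2V : ∀ x (i : Fin N), V (x + (T : ℤ) • Pi.single i 1) = V x)
    (hA2f : ∀ x (i : Fin N) (u : ℝ), f (x + (T : ℤ) • Pi.single i 1) u = f x u)
    (hVpos : ∀ x, 0 < V x)
    (hA3 : ∀ ε > (0:ℝ), ∃ δ > (0:ℝ), ∀ x u, |u| < δ → |f x u| ≤ ε * |u| ^ (p - 1))
    (hA4 : ∀ x, StrictMonoOn (fun u => f x u / |u| ^ (p - 1)) (Set.Iio 0) ∧
               StrictMonoOn (fun u => f x u / |u| ^ (p - 1)) (Set.Ioi 0))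
    (hA5 : ∀ M : ℝ, ∃ R > (0:ℝ), ∀ x u, R ≤ |u| → M ≤ Fprim f x u / |u| ^ p)
    (u : ℕ → (Vtx N → ℝ)) (hmem : ∀ n, u n ∈ Nehari N p V f)
    (M : ℝ) (hbd : ∀ n, eNorm N p V (u n) ≤ M)
    (c : ℝ) (hPhi : Tendsto (fun n => PhiFun N p V f (u n)) atTop (𝓝 c))
    (ε : ℕ → ℝ) (hε : Tendsto ε atTop (𝓝 0))
    (hPS : ∀ n, ∀ v : Vtx N → ℝ, memE N p v →
      |PhiDeriv N p V f (u n) v| ≤ ε n * eNorm N p V v)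
    (ulim : Vtx N → ℝ) (hulim : memE N p ulim)
    (hweak : ∀ v : Vtx N → ℝ, Summable (fun x => |v x| ^ (p / (p - 1))) →
      Tendsto (fun n => ∑' x, u n x * v x) atTop (𝓝 (∑' x, ulim x * v x)))
    (hptw : ∀ x, Tendsto (fun n => u n x) atTop (𝓝 (ulim x))) :
    ∀ v : Vtx N → ℝ, memE N p v → PhiDeriv N p V f ulim v = 0 := by
  intro v hv
  classical
  -- Step 1: the Euler–Lagrange equation holds at every vertex, by testing the
  -- Palais–Smale condition against Kronecker deltas and passing to the limit.
  have hEL : ∀ x : Vtx N, V x * |ulim x| ^ (p - 2) * ulim x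
      = f x (ulim x) + pLap N p ulim x := by
    intro x
    have hδ : memE N p (Pi.single x (1:ℝ)) := Stmt18Aux.memE_single hp x
    have h0 : Tendsto (fun n => PhiDeriv N p V f (u n) (Pi.single x 1)) atTop (𝓝 0) := by
      have hb : ∀ n, ‖PhiDeriv N p V f (u n) (Pi.single x 1)‖
          ≤ ε n * eNorm N p V (Pi.single x 1) := fun n => by
        rw [Real.norm_eq_abs]; exact hPS n _ hδ
      have h1 : Tendsto (fun n => ε n * eNorm N p V (Pi.single x 1)) atTop (𝓝 0) := by
        simpa using hε.mul_const (eNorm N p V (Pi.single x 1))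
      exact squeeze_zero_norm hb h1
    have hlim : Tendsto (fun n => PhiDeriv N p V f (u n) (Pi.single x 1)) atTop
        (𝓝 (-pLap N p ulim x + V x * |ulim x| ^ (p - 2) * ulim x - f x (ulim x))) := by
      have heq : (fun n => PhiDeriv N p V f (u n) (Pi.single x 1))
          = fun n => -pLap N p (u n) x + V x * |u n x| ^ (p - 2) * u n x - f x (u n x) :=
        funext fun n => Stmt18Aux.phiDeriv_single hp V f (u n) x
      rw [heq]
      apply Tendsto.sub
      · apply Tendsto.add
        · apply Tendsto.neg
          have heq2 : (fun n => pLap N p (u n) x)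
              = fun n => ∑ y ∈ Stmt18Aux.box x,
                  if LatAdj x y then |u n y - u n x| ^ (p - 2) * (u n y - u n x) else 0 :=
            funext fun n => Stmt18Aux.pLap_eq_sum (u n) x
          rw [heq2, Stmt18Aux.pLap_eq_sum ulim x]
          apply tendsto_finset_sum
          intro y _
          by_cases hadj : LatAdj x y
          · simp only [if_pos hadj]
            exact ((Stmt18Aux.phi_cont hp).tendsto _).comp ((hptw y).sub (hptw x))
          · simp only [if_neg hadj]; exact tendsto_const_nhds
        · have h2 : Tendsto (fun n => V x * (|u n x| ^ (p - 2) * u n x)) atTop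
              (𝓝 (V x * (|ulim x| ^ (p - 2) * ulim x))) :=
            (((Stmt18Aux.phi_cont hp).tendsto _).comp (hptw x)).const_mul (V x)
          simpa [mul_assoc] using h2
      · exact ((hfc x).tendsto _).comp (hptw x)
    have hu := tendsto_nhds_unique hlim h0
    linarith
  -- Step 2: summability facts.
  set g : Vtx N × Vtx N → ℝ := fun z =>
    if LatAdj z.1 z.2 then |ulim z.2 - ulim z.1| ^ (p - 2) * (ulim z.2 - ulim z.1) else 0
    with hg
  have hp0' : p ≠ 0 := by positivity
  have habs_if : ∀ (P : Prop) (hP : Decidable P) (t : ℝ),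
      (if P then |t| ^ p else 0) = |(if P then t else 0)| ^ p := by
    intro P hP t
    split_ifs
    · rfl
    · simp [Real.zero_rpow hp0']
  have hA : Summable fun z : Vtx N × Vtx N =>
      |if LatAdj z.1 z.2 then ulim z.2 - ulim z.1 else 0| ^ p :=
    (Stmt18Aux.summable_pair_grad hp hulim).congr fun z => habs_if _ _ _
  have S1 : Summable fun z : Vtx N × Vtx N => g z * v z.1 := by
    have hw : Summable fun z : Vtx N × Vtx N => |if LatAdj z.1 z.2 then v z.1 else 0| ^ p :=
      (Stmt18Aux.summable_pair_fst hp hv).congr fun z => habs_if _ _ _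
    refine (Stmt18Aux.summable_phi_mul hp hA hw).congr fun z => ?_
    by_cases h : LatAdj z.1 z.2 <;> simp [hg, h]
  have S2 : Summable fun z : Vtx N × Vtx N => g z * v z.2 := by
    have hw : Summable fun z : Vtx N × Vtx N => |if LatAdj z.1 z.2 then v z.2 else 0| ^ p :=
      (Stmt18Aux.summable_pair_snd hp hv).congr fun z => habs_if _ _ _
    refine (Stmt18Aux.summable_phi_mul hp hA hw).congr fun z => ?_
    by_cases h : LatAdj z.1 z.2 <;> simp [hg, h]
  have hslice : ∀ x : Vtx N, (∑' y, g (x, y)) = pLap N p ulim x := by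
    intro x; rw [hg]; rfl
  have SpLv : Summable fun x : Vtx N => pLap N p ulim x * v x := by
    refine ⟨∑' z : Vtx N × Vtx N, g z * v z.1,
      HasSum.prod_fiberwise S1.hasSum fun x => ?_⟩
    have hx : Summable fun y => g (x, y) * v x := S1.prod_factor x
    have h1 := hx.hasSum
    rwa [tsum_mul_right, hslice x] at h1
  obtain ⟨δ₀, hδ₀, hfδ⟩ := hA3 1 one_pos
  have hfin : ({x : Vtx N | δ₀ ≤ |ulim x|}).Finite := by
    have h2 := hulim.tendsto_cofinite_zero (Iio_mem_nhds (Real.rpow_pos_of_pos hδ₀ p))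
    have h3 := Filter.mem_cofinite.mp h2
    apply h3.subset
    intro x hx
    simp only [Set.mem_setOf_eq] at hx
    simp only [Set.mem_compl_iff, Set.mem_preimage, Set.mem_Iio, not_lt]
    exact Real.rpow_le_rpow hδ₀.le hx (by linarith)
  have S_fv : Summable fun x : Vtx N => f x (ulim x) * v x := by
    apply Summable.of_abs
    have hbound : Summable fun x : Vtx N =>
        ({x : Vtx N | δ₀ ≤ |ulim x|}.indicator (fun x => |f x (ulim x) * v x|) x
          + (|ulim x| ^ p / (p / (p - 1)) + |v x| ^ p / p)) := by
      apply Summable.add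
      · apply summable_of_ne_finset_zero (s := hfin.toFinset)
        intro b hb
        exact Set.indicator_of_notMem (by simpa using hb) _
      · exact (hulim.div_const _).add (hv.div_const _)
    apply Summable.of_nonneg_of_le (fun x => abs_nonneg _) ?_ hbound
    intro x
    by_cases hx : x ∈ {x : Vtx N | δ₀ ≤ |ulim x|}
    · rw [Set.indicator_of_mem hx]
      have hnn : (0:ℝ) ≤ |ulim x| ^ p / (p / (p - 1)) + |v x| ^ p / p :=
        add_nonneg
          (div_nonneg (Real.rpow_nonneg (abs_nonneg _) _)
            (div_nonneg (by linarith) (by linarith)))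
          (div_nonneg (Real.rpow_nonneg (abs_nonneg _) _) (by linarith))
      linarith
    · rw [Set.indicator_of_notMem hx, zero_add]
      have h3 : |f x (ulim x)| ≤ 1 * |ulim x| ^ (p - 1) :=
        hfδ x (ulim x) (not_le.mp hx)
      rw [one_mul] at h3
      calc |f x (ulim x) * v x| = |f x (ulim x)| * |v x| := abs_mul _ _
        _ ≤ |ulim x| ^ (p - 1) * |v x| :=
            mul_le_mul_of_nonneg_right h3 (abs_nonneg _)
        _ ≤ _ := Stmt18Aux.young_pair hp (ulim x) (v x)
  -- Step 3: summation by parts.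
  have hswap : ∀ z : Vtx N × Vtx N, g z * v z.2
      = -(g ((Equiv.prodComm (Vtx N) (Vtx N)) z)
          * v ((Equiv.prodComm (Vtx N) (Vtx N)) z).1) := by
    intro z
    simp only [hg, Equiv.prodComm_apply, Prod.fst_swap, Prod.snd_swap]
    by_cases h : LatAdj z.1 z.2
    · rw [if_pos h, if_pos (Stmt18Aux.adj_comm h),
        show ulim z.1 - ulim z.2 = -(ulim z.2 - ulim z.1) by ring, abs_neg]
      ring
    · rw [if_neg h, if_neg (fun hc => h (Stmt18Aux.adj_comm hc))]
      simp
  have hT2 : (∑' z : Vtx N × Vtx N, g z * v z.2)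
      = - ∑' z : Vtx N × Vtx N, g z * v z.1 := by
    calc (∑' z : Vtx N × Vtx N, g z * v z.2)
        = ∑' z : Vtx N × Vtx N, -(g ((Equiv.prodComm (Vtx N) (Vtx N)) z)
            * v ((Equiv.prodComm (Vtx N) (Vtx N)) z).1) := tsum_congr hswap
      _ = ∑' w : Vtx N × Vtx N, -(g w * v w.1) :=
          (Equiv.prodComm (Vtx N) (Vtx N)).tsum_eq (fun w => -(g w * v w.1))
      _ = - ∑' z : Vtx N × Vtx N, g z * v z.1 := tsum_neg
  have hT1 : (∑' z : Vtx N × Vtx N, g z * v z.1)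
      = ∑' x, pLap N p ulim x * v x := by
    rw [Summable.tsum_prod S1]
    refine tsum_congr fun x => ?_
    show (∑' y, g (x, y) * v x) = pLap N p ulim x * v x
    rw [tsum_mul_right, hslice x]
  have hgrad : gradPair N p ulim v = - ∑' x, pLap N p ulim x * v x := by
    have hterm : ∀ z : Vtx N × Vtx N,
        (if LatAdj z.1 z.2 then
          |ulim z.2 - ulim z.1| ^ (p - 2) * (ulim z.2 - ulim z.1) * (v z.2 - v z.1) else 0)
        = g z * v z.2 - g z * v z.1 := by
      intro z; simp only [hg]; split_ifs <;> ring
    rw [gradPair, tsum_congr hterm, Summable.tsum_sub S2 S1, hT2, hT1]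
    ring
  -- Step 4: conclusion.
  have hmid : (∑' x, V x * |ulim x| ^ (p - 2) * ulim x * v x)
      = (∑' x, f x (ulim x) * v x) + ∑' x, pLap N p ulim x * v x := by
    rw [← Summable.tsum_add S_fv SpLv]
    apply tsum_congr
    intro x
    calc V x * |ulim x| ^ (p - 2) * ulim x * v x
        = (V x * |ulim x| ^ (p - 2) * ulim x) * v x := by ring
      _ = (f x (ulim x) + pLap N p ulim x) * v x := by rw [hEL x]
      _ = f x (ulim x) * v x + pLap N p ulim x * v x := by ring
  rw [PhiDeriv, hgrad, hmid]
  ring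
end
end

section
/- With assumptions (A₁)–(A₅), if {u_n} ⊂ 𝒩 satisfies Φ'(u_n) → 0 and u_n → 0 in ℓ^q(ℤ^N) (for the exponent q from the growth condition), then ‖u_n‖ → 0; consequently, since every element of 𝒩 has norm at least δ > 0, Palais–Smale sequences in 𝒩 cannot converge to 0 in ℓ^q. -/
open scoped BigOperators
open Filter Topology

noncomputable section

variable {p : ℝ}

/-- |t|^(p-2) * t * t = |t|^p -/
lemma aux_rpow_self (hp : 1 < p) (t : ℝ) : |t| ^ (p-2) * t * t = |t| ^ p := by
  rcases eq_or_ne t 0 with h | h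
  · simp [h, Real.zero_rpow (by linarith : p ≠ 0)]
  · have h0 : (0:ℝ) < |t| := abs_pos.2 h
    have h1 : |t| ^ (p-2) * t * t = |t| ^ (p-2) * (|t| ^ (1:ℝ) * |t| ^ (1:ℝ)) := by
      rw [Real.rpow_one, abs_mul_abs_self]; ring
    rw [h1, ← Real.rpow_add h0, ← Real.rpow_add h0]
    norm_num

/-- |t|^(p-2)*t has abs |t|^(p-1) -/
lemma aux_rpow_abs (hp : 1 < p) (t : ℝ) : |(|t| ^ (p-2) * t)| = |t| ^ (p-1) := by
  rcases eq_or_ne t 0 with h | h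
  · simp [h, Real.zero_rpow (by linarith : p - 1 ≠ 0)]
  · have h0 : (0:ℝ) < |t| := abs_pos.2 h
    rw [abs_mul, abs_of_nonneg (Real.rpow_nonneg (abs_nonneg t) _)]
    nth_rewrite 2 [← Real.rpow_one |t|]
    rw [← Real.rpow_add h0]
    ring_nf

/-- |a|^(p-1) * |b| ≤ |a|^p + |b|^p for nonneg a b -/
lemma aux_young (hp : 1 < p) {a b : ℝ} (ha : 0 ≤ a) (hb : 0 ≤ b) :
    a ^ (p-1) * b ≤ a ^ p + b ^ p := by
  set m := max a b with hm
  have hm0 : 0 ≤ m := le_trans ha (le_max_left _ _)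
  have h1 : a ^ (p-1) * b ≤ m ^ (p-1) * m ^ (1:ℝ) := by
    apply mul_le_mul (Real.rpow_le_rpow ha (le_max_left _ _) (by linarith))
      (by rw [Real.rpow_one]; exact le_max_right _ _) hb (Real.rpow_nonneg hm0 _)
  have h2 : m ^ (p-1) * m ^ (1:ℝ) = m ^ p := by
    rw [← Real.rpow_add' hm0 (by intro hc; linarith : p - 1 + 1 ≠ 0)]; norm_num
  rw [h2] at h1
  refine h1.trans ?_
  rcases max_cases a b with ⟨he, _⟩ | ⟨he, _⟩
  · rw [hm, he]; nlinarith [Real.rpow_nonneg hb p]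
  · rw [hm, he]; nlinarith [Real.rpow_nonneg ha p]

/-- |a - b|^p ≤ 2^p * (|a|^p + |b|^p) -/
lemma aux_sub_rpow (hp : 1 < p) (a b : ℝ) : |a - b| ^ p ≤ 2 ^ p * (|a| ^ p + |b| ^ p) := by
  set m := max |a| |b| with hm
  have hm0 : 0 ≤ m := le_trans (abs_nonneg a) (le_max_left _ _)
  have h1 : |a - b| ≤ 2 * m := by
    calc |a - b| ≤ |a| + |b| := abs_sub _ _
    _ ≤ 2 * m := by
        rcases le_total |a| |b| with h | h
        · rw [hm, max_eq_right h]; linarith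
        · rw [hm, max_eq_left h]; linarith
  calc |a - b| ^ p ≤ (2 * m) ^ p := Real.rpow_le_rpow (abs_nonneg _) h1 (by linarith)
  _ = 2 ^ p * m ^ p := Real.mul_rpow (by norm_num) hm0
  _ ≤ 2 ^ p * (|a| ^ p + |b| ^ p) := by
      apply mul_le_mul_of_nonneg_left _ (Real.rpow_nonneg (by norm_num) p)
      rcases max_cases |a| |b| with ⟨he, _⟩ | ⟨he, _⟩
      · rw [hm, he]; nlinarith [Real.rpow_nonneg (abs_nonneg b) p]
      · rw [hm, he]; nlinarith [Real.rpow_nonneg (abs_nonneg a) p]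

variable {N : ℕ}

def nbrF (x : Vtx N) : Finset (Vtx N) :=
  Fintype.piFinset (fun i => Finset.Icc (x i - 1) (x i + 1))

lemma mem_nbrF {x y : Vtx N} (h : LatAdj x y) : y ∈ nbrF x := by
  rw [nbrF, Fintype.mem_piFinset]
  intro i
  rw [Finset.mem_Icc]
  have h1 : |x i - y i| ≤ 1 := by
    rw [← h]
    exact Finset.single_le_sum (f := fun j => |x j - y j|) (fun j _ => abs_nonneg _)
      (Finset.mem_univ i)
  rw [abs_le] at h1
  constructor <;> linarith [h1.1, h1.2]

lemma card_nbrF (x : Vtx N) : (nbrF x).card ≤ 3 ^ N := by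
  rw [nbrF, Fintype.card_piFinset]
  apply le_of_eq
  have h3 : ∀ i ∈ Finset.univ, (Finset.Icc (x i - 1) (x i + 1)).card = 3 := by
    intro i _
    rw [Int.card_Icc]
    omega
  rw [Finset.prod_congr rfl h3]
  simp

lemma latAdj_symm {x y : Vtx N} (h : LatAdj x y) : LatAdj y x := by
  rw [LatAdj] at *
  rw [← h]
  exact Finset.sum_congr rfl (fun i _ => abs_sub_comm _ _)

/-- summability and bound for pair sums that only see the first coordinate -/
lemma pair_fst (h : Vtx N → ℝ) (h0 : ∀ x, 0 ≤ h x) (hs : Summable h) :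
    Summable (fun z : Vtx N × Vtx N => if LatAdj z.1 z.2 then h z.1 else 0) ∧
    ∑' z : Vtx N × Vtx N, (if LatAdj z.1 z.2 then h z.1 else 0) ≤ 3 ^ N * ∑' x, h x := by
  set F : Vtx N × Vtx N → ℝ := fun z => if LatAdj z.1 z.2 then h z.1 else 0 with hF
  have hF0 : 0 ≤ F := by
    intro z; by_cases hz : LatAdj z.1 z.2 <;> simp [hF, hz, h0]
  have hinner : ∀ x, ∑' y, F (x, y) = ∑ y ∈ nbrF x, F (x, y) := by
    intro x
    apply tsum_eq_sum
    intro y hy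
    simp only [hF]
    rw [if_neg (fun hc => hy (mem_nbrF hc))]
  have hinnerS : ∀ x : Vtx N, Summable (fun y => F (x, y)) := by
    intro x
    apply summable_of_finite_support
    apply Set.Finite.subset (nbrF x).finite_toSet
    intro y hy
    simp only [Function.mem_support, hF] at hy
    by_contra hc
    exact hy (if_neg (fun ha => hc (mem_nbrF ha)))
  have hbound : ∀ x, ∑' y, F (x, y) ≤ 3 ^ N * h x := by
    intro x
    rw [hinner x]
    calc ∑ y ∈ nbrF x, F (x, y) ≤ ∑ y ∈ nbrF x, h x := by
          apply Finset.sum_le_sum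
          intro y _
          by_cases hz : LatAdj x y <;> simp [hF, hz, h0 x]
    _ = (nbrF x).card * h x := by rw [Finset.sum_const, nsmul_eq_mul]
    _ ≤ 3 ^ N * h x := by
        apply mul_le_mul_of_nonneg_right _ (h0 x)
        exact_mod_cast Nat.cast_le.mpr (card_nbrF x)
  have hSum : Summable F := by
    rw [summable_prod_of_nonneg hF0]
    refine ⟨hinnerS, ?_⟩
    apply Summable.of_nonneg_of_le (fun x => tsum_nonneg (fun y => hF0 (x, y))) hbound
    exact hs.mul_left _
  refine ⟨hSum, ?_⟩
  rw [Summable.tsum_prod' hSum hinnerS]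
  calc ∑' x, ∑' y, F (x, y) ≤ ∑' x, 3 ^ N * h x := by
        exact Summable.tsum_le_tsum hbound ((summable_prod_of_nonneg hF0).mp hSum).2 (hs.mul_left _)
  _ = 3 ^ N * ∑' x, h x := tsum_mul_left

lemma pair_snd (h : Vtx N → ℝ) (h0 : ∀ x, 0 ≤ h x) (hs : Summable h) :
    Summable (fun z : Vtx N × Vtx N => if LatAdj z.1 z.2 then h z.2 else 0) ∧
    ∑' z : Vtx N × Vtx N, (if LatAdj z.1 z.2 then h z.2 else 0) ≤ 3 ^ N * ∑' x, h x := by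
  obtain ⟨hS, hB⟩ := pair_fst h h0 hs
  set F : Vtx N × Vtx N → ℝ := fun z => if LatAdj z.1 z.2 then h z.1 else 0 with hF
  have hkey : (fun z : Vtx N × Vtx N => if LatAdj z.1 z.2 then h z.2 else 0) = F ∘ Prod.swap := by
    funext z
    simp only [Function.comp, hF, Prod.fst_swap, Prod.snd_swap]
    by_cases hz : LatAdj z.1 z.2
    · rw [if_pos hz, if_pos (latAdj_symm hz)]
    · rw [if_neg hz, if_neg (fun hc => hz (latAdj_symm hc))]
  rw [hkey]
  refine ⟨hS.comp_injective Prod.swap_injective, ?_⟩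
  have h2 : ∑' z : Vtx N × Vtx N, F z.swap = ∑' z, F z :=
    (Equiv.prodComm (Vtx N) (Vtx N)).tsum_eq F
  calc ∑' z : Vtx N × Vtx N, (F ∘ Prod.swap) z = ∑' z, F z := h2
  _ ≤ 3 ^ N * ∑' x, h x := hB

/-- master lemma: bound a pair sum supported on adjacent pairs -/
lemma pair_master (w : Vtx N × Vtx N → ℝ) (h : Vtx N → ℝ) (h0 : ∀ x, 0 ≤ h x)
    (hs : Summable h) (hw : ∀ z, LatAdj z.1 z.2 → |w z| ≤ h z.1 + h z.2)
    (hw0 : ∀ z, ¬ LatAdj z.1 z.2 → w z = 0) :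
    Summable w ∧ |∑' z, w z| ≤ 2 * 3 ^ N * ∑' x, h x := by
  obtain ⟨hS1, hB1⟩ := pair_fst h h0 hs
  obtain ⟨hS2, hB2⟩ := pair_snd h h0 hs
  set H : Vtx N × Vtx N → ℝ := fun z =>
    (if LatAdj z.1 z.2 then h z.1 else 0) + (if LatAdj z.1 z.2 then h z.2 else 0) with hH
  have hHS : Summable H := hS1.add hS2
  have hwH : ∀ z, |w z| ≤ H z := by
    intro z
    by_cases hz : LatAdj z.1 z.2
    · simpa [hH, hz] using hw z hz
    · simp [hH, hz, hw0 z hz]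
  have hwS : Summable w := by
    apply Summable.of_norm_bounded hHS
    simpa [Real.norm_eq_abs] using hwH
  refine ⟨hwS, ?_⟩
  calc |∑' z, w z| ≤ ∑' z, |w z| := by
        simpa [Real.norm_eq_abs] using
          norm_tsum_le_tsum_norm (f := w) (by simpa [Real.norm_eq_abs] using hwS.abs)
  _ ≤ ∑' z, H z := Summable.tsum_le_tsum hwH hwS.abs hHS
  _ = (∑' z : Vtx N × Vtx N, if LatAdj z.1 z.2 then h z.1 else 0)
      + ∑' z : Vtx N × Vtx N, if LatAdj z.1 z.2 then h z.2 else 0 := Summable.tsum_add hS1 hS2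
  _ ≤ 3 ^ N * ∑' x, h x + 3 ^ N * ∑' x, h x := add_le_add hB1 hB2
  _ = 2 * 3 ^ N * ∑' x, h x := by ring

lemma add_smul_single (x : Vtx N) (s : Vtx N) (a b : ℤ) :
    x + a • s + b • s = x + (a + b) • s := by
  rw [add_assoc, ← add_smul]

lemma shift_inv (V : Vtx N → ℝ) (T : ℕ)
    (hA2V : ∀ x (i : Fin N), V (x + (T : ℤ) • Pi.single i 1) = V x) :
    ∀ (k : ℤ) (x : Vtx N) (i : Fin N), V (x + (k * T) • Pi.single i 1) = V x := by
  intro k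
  induction k using Int.induction_on with
  | zero => intro x i; simp
  | succ k ih =>
      intro x i
      have h1 : x + ((k + 1 : ℤ) * T) • Pi.single i 1
          = (x + (T : ℤ) • Pi.single i 1) + ((k : ℤ) * T) • Pi.single i 1 := by
        rw [add_smul_single]
        congr 1
        ring
      rw [h1, ih, hA2V]
  | pred k ih =>
      intro x i
      have h1 : (x + ((-k - 1 : ℤ) * T) • Pi.single i 1) + (T : ℤ) • Pi.single i 1
          = x + ((-k : ℤ) * T) • Pi.single i 1 := by
        rw [add_smul_single]
        congr 1
        ring
      have h2 := hA2V (x + ((-k - 1 : ℤ) * T) • Pi.single i 1) i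
      rw [h1, ih] at h2
      exact h2.symm

lemma finset_shift (V : Vtx N → ℝ) (T : ℕ)
    (hA2V : ∀ x (i : Fin N), V (x + (T : ℤ) • Pi.single i 1) = V x) (c : Fin N → ℤ) :
    ∀ (s : Finset (Fin N)) (x : Vtx N),
      V (x + ∑ i ∈ s, (c i * T) • Pi.single i 1) = V x := by
  intro s
  induction s using Finset.induction_on with
  | empty => intro x; simp
  | @insert a s ha ih =>
      intro x
      rw [Finset.sum_insert ha, ← add_assoc, ih, shift_inv V T hA2V]

lemma exists_V1 (V : Vtx N → ℝ) (T : ℕ) (hT : 0 < T)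
    (hA2V : ∀ x (i : Fin N), V (x + (T : ℤ) • Pi.single i 1) = V x)
    (hVpos : ∀ x, 0 < V x) :
    ∃ V1 > (0:ℝ), ∀ x, V1 ≤ V x := by
  haveI : Nonempty (Fin T) := ⟨⟨0, hT⟩⟩
  have hne : (Finset.univ : Finset (Fin N → Fin T)).Nonempty := Finset.univ_nonempty
  set c : (Fin N → Fin T) → ℝ := fun y => V (fun i => (y i : ℤ)) with hc
  refine ⟨Finset.univ.inf' hne c, (Finset.lt_inf'_iff hne).mpr (fun y _ => hVpos _), fun x => ?_⟩
  have hTz : (0:ℤ) < (T:ℤ) := by exact_mod_cast hT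
  have hmod : V (fun i => x i % (T:ℤ)) = V x := by
    have hkey := finset_shift V T hA2V (fun i => -(x i / T)) Finset.univ x
    have heq : (fun i => x i % (T:ℤ))
        = x + ∑ i, (-(x i / (T:ℤ)) * T) • Pi.single i 1 := by
      funext j
      have hsum : (∑ i, (-(x i / (T:ℤ)) * T) • Pi.single i (1:ℤ)) j
          = -(x j / (T:ℤ)) * T := by
        rw [Finset.sum_apply]
        rw [Finset.sum_eq_single j]
        · simp
        · intro b _ hb
          simp [Pi.single_apply, Ne.symm hb]
        · intro h; exact absurd (Finset.mem_univ j) h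
      show x j % (T:ℤ) = x j + _
      rw [hsum, Int.emod_def]
      ring
    rw [heq, hkey]
  set y : Fin N → Fin T := fun i => ⟨(x i % (T:ℤ)).toNat,
    (Int.toNat_lt' hT).mpr (Int.emod_lt_of_pos _ hTz)⟩ with hy
  have hco : (fun i => ((y i : ℕ) : ℤ)) = fun i => x i % (T:ℤ) := by
    funext i
    simp only [hy]
    exact Int.toNat_of_nonneg (Int.emod_nonneg _ hTz.ne')
  calc Finset.univ.inf' hne c ≤ c y := Finset.inf'_le c (Finset.mem_univ y)
  _ = V x := by rw [hc]; simp only; rw [hco, hmod]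

lemma sublinear (hp : 1 < p) (c : ℝ) (hc : 0 < c) :
    ∃ D : ℝ, 0 ≤ D ∧ ∀ x : ℝ, 0 ≤ x → c * x ^ (1/p) ≤ x / 2 + D := by
  have hp0 : (0:ℝ) < p := by linarith
  have hp1 : (0:ℝ) < p - 1 := by linarith
  set x0 : ℝ := (2*c) ^ (p/(p-1)) with hx0def
  have h2c : (0:ℝ) < 2*c := by linarith
  have hx0 : 0 < x0 := Real.rpow_pos_of_pos h2c _
  refine ⟨c * x0 ^ (1/p), by positivity, fun x hx => ?_⟩
  rcases le_total x x0 with h | h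
  · have h1 : c * x ^ (1/p) ≤ c * x0 ^ (1/p) := by
      apply mul_le_mul_of_nonneg_left (Real.rpow_le_rpow hx h (by positivity)) hc.le
    linarith
  · have hxpos : 0 < x := lt_of_lt_of_le hx0 h
    have hkey : 2 * c ≤ x ^ ((p-1)/p) := by
      calc 2 * c = x0 ^ ((p-1)/p) := by
            rw [hx0def, ← Real.rpow_mul h2c.le]
            rw [show p/(p-1) * ((p-1)/p) = 1 by field_simp]
            rw [Real.rpow_one]
      _ ≤ x ^ ((p-1)/p) := Real.rpow_le_rpow hx0.le h (by positivity)
    have h2 : 2 * (c * x ^ (1/p)) ≤ x ^ ((p-1)/p) * x ^ (1/p) := by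
      have := mul_le_mul_of_nonneg_right hkey (Real.rpow_nonneg hxpos.le (1/p))
      linarith
    rw [← Real.rpow_add hxpos, show (p-1)/p + 1/p = 1 by field_simp; ring, Real.rpow_one] at h2
    have hD : 0 ≤ c * x0 ^ (1/p) := by positivity
    linarith

/-- peel one factor off an rpow of an abs -/
lemma aux_peel {r : ℝ} (hr : 1 < r) (t : ℝ) : |t| ^ (r-1) * |t| = |t| ^ r := by
  rcases eq_or_ne t 0 with h | h
  · simp [h, Real.zero_rpow (by linarith : r ≠ 0)]
  · have h0 : (0:ℝ) < |t| := abs_pos.2 h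
    nth_rewrite 2 [← Real.rpow_one |t|]
    rw [← Real.rpow_add h0]
    ring_nf

/-- the pointwise bound on f(x,t)·t -/
lemma pt_bound {p q : ℝ} (hp : 1 < p) (hq : p < q) (a δ0 V1 : ℝ)
    (ha : 0 < a) (hδ0 : 0 < δ0) (hV1 : 0 < V1) {N : ℕ} (f : Vtx N → ℝ → ℝ)
    (hfa : ∀ x t, |f x t| ≤ a * (1 + |t| ^ (q-1)))
    (hfδ : ∀ x t, |t| < δ0 → |f x t| ≤ (V1/2) * |t| ^ (p-1)) :
    ∀ x t, |f x t * t| ≤ (V1/2) * |t| ^ p + (a * (δ0 ^ (1-q) + 1)) * |t| ^ q := by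
  intro x t
  have hq1 : (1:ℝ) < q := by linarith
  have habs : |f x t * t| = |f x t| * |t| := abs_mul _ _
  rcases lt_or_ge |t| δ0 with h | h
  · have h1 : |f x t| * |t| ≤ ((V1/2) * |t| ^ (p-1)) * |t| :=
      mul_le_mul_of_nonneg_right (hfδ x t h) (abs_nonneg t)
    have h2 : ((V1/2) * |t| ^ (p-1)) * |t| = (V1/2) * |t| ^ p := by
      rw [mul_assoc, aux_peel hp]
    have h3 : 0 ≤ (a * (δ0 ^ (1-q) + 1)) * |t| ^ q := by positivity
    rw [habs]; linarith
  · have ht0 : (0:ℝ) < |t| := lt_of_lt_of_le hδ0 h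
    have h1 : |f x t| * |t| ≤ (a * (1 + |t| ^ (q-1))) * |t| :=
      mul_le_mul_of_nonneg_right (hfa x t) (abs_nonneg t)
    have h2 : (a * (1 + |t| ^ (q-1))) * |t| = a * |t| + a * |t| ^ q := by
      rw [← aux_peel hq1 t]
      ring
    have h3 : |t| ≤ δ0 ^ (1-q) * |t| ^ q := by
      have hsp : |t| ^ (1-q) ≤ δ0 ^ (1-q) :=
        Real.rpow_le_rpow_of_nonpos hδ0 h (by linarith)
      calc |t| = |t| ^ (1-q) * |t| ^ q := by
            rw [← Real.rpow_add ht0]; norm_num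
      _ ≤ δ0 ^ (1-q) * |t| ^ q :=
        mul_le_mul_of_nonneg_right hsp (Real.rpow_nonneg (abs_nonneg t) q)
    have h4 : 0 ≤ (V1/2) * |t| ^ p ∨ True := Or.inr trivial
    have h5 : a * |t| ≤ a * (δ0 ^ (1-q) * |t| ^ q) := mul_le_mul_of_nonneg_left h3 ha.le
    rw [habs]
    calc |f x t| * |t| ≤ a * |t| + a * |t| ^ q := by linarith
    _ ≤ a * (δ0 ^ (1-q) * |t| ^ q) + a * |t| ^ q := by linarith
    _ = (a * (δ0 ^ (1-q) + 1)) * |t| ^ q := by ring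
    _ ≤ (V1/2) * |t| ^ p + (a * (δ0 ^ (1-q) + 1)) * |t| ^ q := by
        have hnn : 0 ≤ (V1/2) * |t| ^ p := by positivity
        linarith

/-- ℓ^p ⊆ ℓ^q for p ≤ q -/
lemma summable_q {p q : ℝ} (hp : 0 < p) (hpq : p < q) {N : ℕ} (u : Vtx N → ℝ)
    (hu : Summable fun x => |u x| ^ p) : Summable fun x => |u x| ^ q := by
  set S := ∑' x, |u x| ^ p with hS
  have hS0 : 0 ≤ S := tsum_nonneg (fun x => Real.rpow_nonneg (abs_nonneg _) p)
  have hb : ∀ x, |u x| ≤ S ^ (1/p) := by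
    intro x
    have h1 : |u x| ^ p ≤ S := Summable.le_tsum hu x (fun j _ => Real.rpow_nonneg (abs_nonneg _) p)
    calc |u x| = (|u x| ^ p) ^ (1/p) := by
          rw [← Real.rpow_mul (abs_nonneg _), mul_one_div, div_self hp.ne', Real.rpow_one]
    _ ≤ S ^ (1/p) := Real.rpow_le_rpow (Real.rpow_nonneg (abs_nonneg _) p) h1 (by positivity)
  refine Summable.of_nonneg_of_le (fun x => Real.rpow_nonneg (abs_nonneg _) q)
    (fun x => ?_) (hu.mul_left ((S ^ (1/p)) ^ (q - p)))
  rcases eq_or_ne (u x) 0 with h | h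
  · rw [h]
    simp only [abs_zero, Real.zero_rpow hp.ne', Real.zero_rpow (by linarith : q ≠ 0), mul_zero]
    exact le_refl 0
  · have h0 : (0:ℝ) < |u x| := abs_pos.2 h
    calc |u x| ^ q = |u x| ^ (q - p) * |u x| ^ p := by
          rw [← Real.rpow_add h0]; ring_nf
    _ ≤ (S ^ (1/p)) ^ (q - p) * |u x| ^ p := by
        apply mul_le_mul_of_nonneg_right _ (Real.rpow_nonneg (abs_nonneg _) p)
        exact Real.rpow_le_rpow (abs_nonneg _) (hb x) (by linarith)

/-- the Nehari identity: `‖u‖^p = ∑ f(x,u)u`. -/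
lemma nehari_id {p : ℝ} (hp : 1 < p) {N : ℕ} (V : Vtx N → ℝ) (f : Vtx N → ℝ → ℝ)
    (u : Vtx N → ℝ) (h : PhiDeriv N p V f u u = 0) :
    eNormP N p V u = ∑' x, f x (u x) * u x := by
  have h1 : gradPair N p u u = pEnergy N p u := by
    rw [gradPair, pEnergy]
    congr 1
    apply tsum_congr
    intro z
    by_cases hz : LatAdj z.1 z.2
    · rw [if_pos hz, if_pos hz, aux_rpow_self hp, abs_sub_comm]
    · rw [if_neg hz, if_neg hz]
  have h2 : ∑' x, V x * |u x| ^ (p-2) * u x * u x = ∑' x, V x * |u x| ^ p := by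
    apply tsum_congr
    intro x
    calc V x * |u x| ^ (p-2) * u x * u x = V x * (|u x| ^ (p-2) * u x * u x) := by ring
    _ = V x * |u x| ^ p := by rw [aux_rpow_self hp]
  rw [PhiDeriv, h1, h2] at h
  rw [eNormP]
  linarith

/-- bound for pEnergy of a function in ℓ^p -/
lemma pEnergy_bound {p : ℝ} (hp : 1 < p) {N : ℕ} (u : Vtx N → ℝ)
    (hu : Summable fun x => |u x| ^ p) :
    0 ≤ pEnergy N p u ∧ pEnergy N p u ≤ 3 ^ N * 2 ^ p * ∑' x, |u x| ^ p := by
  set w : Vtx N × Vtx N → ℝ := fun z => if LatAdj z.1 z.2 then |u z.1 - u z.2| ^ p else 0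
  have hw0 : ∀ z, 0 ≤ w z := by
    intro z
    by_cases hz : LatAdj z.1 z.2 <;> simp [w, hz, Real.rpow_nonneg (abs_nonneg _)]
  obtain ⟨hws, hwb⟩ := pair_master w (fun x => 2 ^ p * |u x| ^ p)
    (fun x => by positivity) (hu.mul_left _)
    (fun z hz => by
      rw [abs_of_nonneg (hw0 z)]
      simp only [w, if_pos hz]
      have := aux_sub_rpow hp (u z.1) (u z.2)
      linarith)
    (fun z hz => by simp [w, hz])
  constructor
  · rw [pEnergy]
    have : 0 ≤ ∑' z, w z := tsum_nonneg hw0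
    linarith
  · rw [pEnergy]
    have h1 : ∑' z, w z ≤ 2 * 3 ^ N * ∑' x, 2 ^ p * |u x| ^ p :=
      le_trans (le_abs_self _) hwb
    rw [tsum_mul_left] at h1
    linarith

/-- bound for gradPair -/
lemma gradPair_bound {p : ℝ} (hp : 1 < p) {N : ℕ} (u v : Vtx N → ℝ)
    (hu : Summable fun x => |u x| ^ p) (hv : Summable fun x => |v x| ^ p) :
    |gradPair N p u v| ≤ 3 ^ N * 2 ^ p * ((∑' x, |u x| ^ p) + ∑' x, |v x| ^ p) := by
  set w : Vtx N × Vtx N → ℝ := fun z =>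
    if LatAdj z.1 z.2 then |u z.2 - u z.1| ^ (p-2) * (u z.2 - u z.1) * (v z.2 - v z.1) else 0
  set h : Vtx N → ℝ := fun x => 2 ^ p * |u x| ^ p + 2 ^ p * |v x| ^ p with hh
  have hsum : Summable h := (hu.mul_left _).add (hv.mul_left _)
  obtain ⟨hws, hwb⟩ := pair_master w h (fun x => by positivity) hsum
    (fun z hz => by
      simp only [w, if_pos hz]
      have e1 : |(|u z.2 - u z.1| ^ (p-2) * (u z.2 - u z.1) * (v z.2 - v z.1))|
          = |u z.2 - u z.1| ^ (p-1) * |v z.2 - v z.1| := by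
        rw [abs_mul, aux_rpow_abs hp]
      rw [e1]
      have e2 : |u z.2 - u z.1| ^ (p-1) * |v z.2 - v z.1|
          ≤ |u z.2 - u z.1| ^ p + |v z.2 - v z.1| ^ p :=
        aux_young hp (abs_nonneg _) (abs_nonneg _)
      have e3 := aux_sub_rpow hp (u z.2) (u z.1)
      have e4 := aux_sub_rpow hp (v z.2) (v z.1)
      simp only [hh]
      linarith)
    (fun z hz => by simp [w, hz])
  rw [gradPair]
  have hts : ∑' x, h x = 2 ^ p * (∑' x, |u x| ^ p) + 2 ^ p * ∑' x, |v x| ^ p := by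
    rw [hh, Summable.tsum_add (hu.mul_left _) (hv.mul_left _), tsum_mul_left, tsum_mul_left]
  rw [hts] at hwb
  rw [abs_mul]
  have h2p : (0:ℝ) < 2 ^ p := Real.rpow_pos_of_pos (by norm_num) p
  have h3N : (0:ℝ) < 3 ^ N := by positivity
  have hSu : 0 ≤ ∑' x, |u x| ^ p := tsum_nonneg (fun x => Real.rpow_nonneg (abs_nonneg _) _)
  have hSv : 0 ≤ ∑' x, |v x| ^ p := tsum_nonneg (fun x => Real.rpow_nonneg (abs_nonneg _) _)
  have : |(1:ℝ)/2| = 1/2 := by norm_num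
  rw [this]
  nlinarith [hwb]

lemma trunc_summable {p : ℝ} (hp : 1 < p) {N : ℕ} (V : Vtx N → ℝ) (f : Vtx N → ℝ → ℝ)
    (u : Vtx N → ℝ) (hV0 : ∀ x, 0 ≤ V x) (hE : Summable fun x => |u x| ^ p)
    (hfu : Summable fun x => |f x (u x) * u x|) (c : ℝ)
    (hPS : ∀ v, memE N p v → |PhiDeriv N p V f u v| ≤ c * eNorm N p V v) :
    Summable (fun x => V x * |u x| ^ p) := by
  have hp0 : (0:ℝ) < p := by linarith
  set S := ∑' x, |u x| ^ p with hSdef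
  have hS0 : 0 ≤ S := tsum_nonneg (fun x => Real.rpow_nonneg (abs_nonneg _) p)
  set A : ℝ := 3 ^ N * 2 ^ p * (2 * S) with hAdef
  have h2p : (0:ℝ) < 2 ^ p := Real.rpow_pos_of_pos (by norm_num) p
  have h3N : (0:ℝ) < (3:ℝ) ^ N := by positivity
  have hA0 : 0 ≤ A := by positivity
  set c1 : ℝ := |c| + 1 with hc1def
  have hc10 : (0:ℝ) < c1 := by positivity
  obtain ⟨D, hD0, hDle⟩ := sublinear hp c1 hc10
  set K2 := ∑' x, |f x (u x) * u x| with hK2def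
  have hK20 : 0 ≤ K2 := tsum_nonneg (fun x => abs_nonneg _)
  apply summable_of_sum_le (c := 3 * A + 2 * D + 2 * K2)
    (fun x => mul_nonneg (hV0 x) (Real.rpow_nonneg (abs_nonneg _) p))
  intro F
  set v : Vtx N → ℝ := fun x => if x ∈ F then u x else 0 with hvdef
  have hvp : ∀ x, |v x| ^ p = if x ∈ F then |u x| ^ p else 0 := by
    intro x
    by_cases hx : x ∈ F
    · simp [hvdef, hx]
    · simp [hvdef, hx, Real.zero_rpow hp0.ne']
  have hvE : memE N p v := by
    rw [memE]
    apply summable_of_finite_support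
    apply Set.Finite.subset F.finite_toSet
    intro x hx
    rw [Function.mem_support] at hx
    by_contra hc2
    exact hx (by rw [hvp x, if_neg (fun h => hc2 (Finset.mem_coe.mpr h))])
  have hSv : ∑' x, |v x| ^ p ≤ S := by
    apply Summable.tsum_le_tsum _ hvE hE
    intro x
    rw [hvp]
    by_cases hx : x ∈ F
    · rw [if_pos hx]
    · rw [if_neg hx]; exact Real.rpow_nonneg (abs_nonneg _) p
  have hSv0 : 0 ≤ ∑' x, |v x| ^ p := tsum_nonneg (fun x => Real.rpow_nonneg (abs_nonneg _) p)
  set tF := ∑ x ∈ F, V x * |u x| ^ p with htFdef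
  have htF0 : 0 ≤ tF :=
    Finset.sum_nonneg (fun x _ => mul_nonneg (hV0 x) (Real.rpow_nonneg (abs_nonneg _) p))
  have hmid : ∑' x, V x * |u x| ^ (p - 2) * u x * v x = tF := by
    rw [tsum_eq_sum (s := F) (fun x hx => by simp [hvdef, if_neg hx])]
    apply Finset.sum_congr rfl
    intro x hx
    simp only [hvdef, if_pos hx]
    calc V x * |u x| ^ (p-2) * u x * u x = V x * (|u x| ^ (p-2) * u x * u x) := by ring
    _ = V x * |u x| ^ p := by rw [aux_rpow_self hp]
  have hlast : ∑' x, f x (u x) * v x = ∑ x ∈ F, f x (u x) * u x := by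
    rw [tsum_eq_sum (s := F) (fun x hx => by simp [hvdef, if_neg hx])]
    apply Finset.sum_congr rfl
    intro x hx
    simp [hvdef, if_pos hx]
  have hlastb : |∑ x ∈ F, f x (u x) * u x| ≤ K2 := by
    calc |∑ x ∈ F, f x (u x) * u x| ≤ ∑ x ∈ F, |f x (u x) * u x| :=
          Finset.abs_sum_le_sum_abs _ _
    _ ≤ K2 := Summable.sum_le_tsum F (fun x _ => abs_nonneg _) hfu
  have hgrad : |gradPair N p u v| ≤ A := by
    have h1 := gradPair_bound hp u v hE hvE
    have h2 : 3 ^ N * 2 ^ p * (S + ∑' x, |v x| ^ p) ≤ A := by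
      rw [hAdef]
      apply mul_le_mul_of_nonneg_left (by linarith) (by positivity)
    exact h1.trans h2
  have hVv : ∑' x, V x * |v x| ^ p = tF := by
    rw [tsum_eq_sum (s := F) (fun x hx => by rw [hvp x, if_neg hx, mul_zero])]
    exact Finset.sum_congr rfl (fun x hx => by rw [hvp x, if_pos hx])
  obtain ⟨hpe0, hpeb⟩ := pEnergy_bound hp v hvE
  have hEv : eNormP N p V v ≤ A + tF := by
    rw [eNormP, hVv]
    have h2 : 3 ^ N * 2 ^ p * (∑' x, |v x| ^ p) ≤ A := by
      rw [hAdef]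
      apply mul_le_mul_of_nonneg_left (by linarith) (by positivity)
    linarith
  have hEv0 : 0 ≤ eNormP N p V v := by
    rw [eNormP, hVv]
    linarith
  have hphi : |PhiDeriv N p V f u v| ≤ c1 * (A + tF) ^ (1/p) := by
    have h1 := hPS v hvE
    have hn0 : 0 ≤ eNorm N p V v := Real.rpow_nonneg hEv0 _
    have h2 : c * eNorm N p V v ≤ c1 * eNorm N p V v := by
      apply mul_le_mul_of_nonneg_right _ hn0
      rw [hc1def]
      have := le_abs_self c
      linarith
    have h3 : eNorm N p V v ≤ (A + tF) ^ (1/p) := by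
      rw [eNorm]
      exact Real.rpow_le_rpow hEv0 hEv (by positivity)
    calc |PhiDeriv N p V f u v| ≤ c1 * eNorm N p V v := h1.trans h2
    _ ≤ c1 * (A + tF) ^ (1/p) := mul_le_mul_of_nonneg_left h3 hc10.le
  have hid : PhiDeriv N p V f u v = gradPair N p u v + tF - ∑ x ∈ F, f x (u x) * u x := by
    rw [PhiDeriv, hmid, hlast]
  have step2 := hDle (A + tF) (by linarith)
  have e1 := le_abs_self (PhiDeriv N p V f u v)
  have e2 := neg_abs_le (gradPair N p u v)
  have e3 := neg_abs_le (∑ x ∈ F, f x (u x) * u x)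
  have e4 := le_abs_self (∑ x ∈ F, f x (u x) * u x)
  have htFle : tF ≤ c1 * (A + tF) ^ (1/p) + A + K2 := by linarith
  linarith

/-- if the derivative of Phi along u_n tends to 0 and u_n tends to 0 in
the q-norm then the E-norm of u_n tends to 0; consequently a Palais-Smale sequence in
the Nehari manifold cannot converge to 0 in the q-norm. -/
theorem stmt_19 (N : ℕ) (p q : ℝ) (hp : 1 < p) (hq : p < q)
    (V : Vtx N → ℝ) (f : Vtx N → ℝ → ℝ) (T : ℕ) (hT : 0 < T)
    (hA1 : ∃ a : ℝ, 0 < a ∧ ∀ x u, |f x u| ≤ a * (1 + |u| ^ (q - 1)))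
    (hfc : ∀ x, Continuous (f x))
    (hA2V : ∀ x (i : Fin N), V (x + (T : ℤ) • Pi.single i 1) = V x)
    (hA2f : ∀ x (i : Fin N) (u : ℝ), f (x + (T : ℤ) • Pi.single i 1) u = f x u)
    (hVpos : ∀ x, 0 < V x)
    (hA3 : ∀ ε > (0:ℝ), ∃ δ > (0:ℝ), ∀ x u, |u| < δ → |f x u| ≤ ε * |u| ^ (p - 1))
    (hA4 : ∀ x, StrictMonoOn (fun u => f x u / |u| ^ (p - 1)) (Set.Iio 0) ∧
               StrictMonoOn (fun u => f x u / |u| ^ (p - 1)) (Set.Ioi 0))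
    (hA5 : ∀ M : ℝ, ∃ R > (0:ℝ), ∀ x u, R ≤ |u| → M ≤ Fprim f x u / |u| ^ p)
    (u : ℕ → (Vtx N → ℝ)) (hmem : ∀ n, u n ∈ Nehari N p V f)
    (ε : ℕ → ℝ) (hε : Tendsto ε atTop (𝓝 0))
    (hPS : ∀ n, ∀ v : Vtx N → ℝ, memE N p v →
      |PhiDeriv N p V f (u n) v| ≤ ε n * eNorm N p V v)
    (hq0 : Tendsto (fun n => ∑' x, |u n x| ^ q) atTop (𝓝 0)) :
    Tendsto (fun n => eNorm N p V (u n)) atTop (𝓝 0) ∧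
    ((∃ δ > (0:ℝ), ∀ v ∈ Nehari N p V f, δ ≤ eNorm N p V v) → False) := by
  have hp0 : (0:ℝ) < p := by linarith
  obtain ⟨V1, hV1, hV1le⟩ := exists_V1 V T hT hA2V hVpos
  obtain ⟨a, ha, hfa⟩ := hA1
  obtain ⟨δ0, hδ0, hfδ⟩ := hA3 (V1/2) (by linarith)
  set C : ℝ := a * (δ0 ^ (1-q) + 1) with hCdef
  have hC0 : 0 < C := by
    apply mul_pos ha
    have : 0 ≤ δ0 ^ (1-q) := Real.rpow_nonneg hδ0.le _
    linarith
  have hpt := pt_bound hp hq a δ0 V1 ha hδ0 hV1 f hfa hfδ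
  have key : ∀ n, 0 ≤ eNormP N p V (u n) ∧
      eNormP N p V (u n) ≤ 2 * C * ∑' x, |u n x| ^ q := by
    intro n
    obtain ⟨hE, hne0, hNeh⟩ := hmem n
    have hQs : Summable (fun x => |u n x| ^ q) := summable_q hp0 hq (u n) hE
    set S := ∑' x, |u n x| ^ p with hSdef
    set Q := ∑' x, |u n x| ^ q with hQdef
    have hS0 : 0 ≤ S := tsum_nonneg (fun x => Real.rpow_nonneg (abs_nonneg _) _)
    have hQ0 : 0 ≤ Q := tsum_nonneg (fun x => Real.rpow_nonneg (abs_nonneg _) _)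
    have hbs : Summable (fun x => (V1/2) * |u n x| ^ p + C * |u n x| ^ q) :=
      (hE.mul_left _).add (hQs.mul_left _)
    have habss : Summable (fun x => |f x (u n x) * u n x|) :=
      Summable.of_nonneg_of_le (fun x => abs_nonneg _) (fun x => hpt x (u n x)) hbs
    have hfus : Summable (fun x => f x (u n x) * u n x) := by
      apply Summable.of_norm_bounded habss
      intro x
      rw [Real.norm_eq_abs]
    have hVsum : Summable (fun x => V x * |u n x| ^ p) :=
      trunc_summable hp V f (u n) (fun x => (hVpos x).le) hE habss (ε n) (hPS n)
    have hid : eNormP N p V (u n) = ∑' x, f x (u n x) * u n x := nehari_id hp V f (u n) hNeh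
    have hub : ∑' x, f x (u n x) * u n x ≤ (V1/2) * S + C * Q := by
      calc ∑' x, f x (u n x) * u n x
          ≤ ∑' x, ((V1/2) * |u n x| ^ p + C * |u n x| ^ q) :=
            Summable.tsum_le_tsum (fun x => (le_abs_self _).trans (hpt x (u n x))) hfus hbs
      _ = (V1/2) * S + C * Q := by
          rw [Summable.tsum_add (hE.mul_left _) (hQs.mul_left _), tsum_mul_left, tsum_mul_left]
    have hpe := (pEnergy_bound hp (u n) hE).1
    have hlow : V1 * S ≤ eNormP N p V (u n) := by
      have h1 : ∑' x, V1 * |u n x| ^ p ≤ ∑' x, V x * |u n x| ^ p :=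
        Summable.tsum_le_tsum
          (fun x => mul_le_mul_of_nonneg_right (hV1le x) (Real.rpow_nonneg (abs_nonneg _) _))
          (hE.mul_left _) hVsum
      rw [tsum_mul_left] at h1
      rw [eNormP]
      linarith
    have hSQ : (V1/2) * S ≤ C * Q := by
      rw [hid] at hlow
      linarith
    have hVnn : 0 ≤ ∑' x, V x * |u n x| ^ p :=
      tsum_nonneg (fun x => mul_nonneg (hVpos x).le (Real.rpow_nonneg (abs_nonneg _) _))
    constructor
    · rw [eNormP]; linarith
    · rw [hid]; linarith
  have hP0 : Tendsto (fun n => eNormP N p V (u n)) atTop (𝓝 0) := by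
    apply squeeze_zero (fun n => (key n).1) (fun n => (key n).2)
    have h1 := hq0.const_mul (2*C)
    simpa using h1
  have hmain : Tendsto (fun n => eNorm N p V (u n)) atTop (𝓝 0) := by
    have h1 := hP0.rpow_const (p := 1/p) (Or.inr (by positivity))
    rw [Real.zero_rpow (one_div_ne_zero hp0.ne')] at h1
    exact h1
  refine ⟨hmain, ?_⟩
  rintro ⟨δ, hδ, hbd⟩
  have hcon : δ ≤ 0 := ge_of_tendsto' hmain (fun n => hbd (u n) (hmem n))
  linarith
end
end
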